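/- Let G be a finite group, X a normal subset of G, and C a big connected component of the commuting graph Γ_X. Then either there exists x ∈ C whose centralizer C_G(x) is non-abelian, or the subgroup ⟨C⟩ generated by C is an abelian normal subgroup of G. -/

import Mathlib

open SimpleGraph

/-- The commuting graph on a subset `X` of a group `G`: vertices are the elements of `X`,
and two distinct vertices are adjacent iff they commute. -/
def commGraph {G : Type*} [Group G] (X : Set G) : SimpleGraph X where
  Adj a b := a ≠ b ∧ (a : G) * (b : G) = (b : G) * (a : G)
  symm := ⟨fun a b h => ⟨h.1.symm, h.2.symm⟩⟩
  loopless := ⟨fun a h => h.1 rfl⟩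

/-- The connected component of `x` in the commuting graph on `X`, viewed as a subset of `G`. -/
def compSet {G : Type*} [Group G] (X : Set G) (x : G) (hx : x ∈ X) : Set G :=
  {y : G | ∃ hy : y ∈ X, (commGraph X).Reachable ⟨x, hx⟩ ⟨y, hy⟩}

/-- The stabilizer `H_x` in `G` of the connected component of `x` in the commuting graph on `X`,
under the conjugation action. -/
def conjStab {G : Type*} [Group G] (X : Set G) (x : G) (hx : x ∈ X) : Set G :=
  {g : G | (fun y => g⁻¹ * y * g) '' compSet X x hx = compSet X x hx}

/-- Let `X` be a normal subset of a finite group `G` and `C` a big connected component of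
the commuting graph on `X` (realized as the component of some `x ∈ X`, invariant under
conjugation). Then either some `y ∈ C` has non-abelian centralizer, or the subgroup
generated by `C` is an abelian normal subgroup of `G`. -/
theorem exists_nonabelian_centralizer_or_closure_abelian_normal
    {G : Type*} [Group G] [Finite G] (X : Set G)
    (hX : ∀ x ∈ X, ∀ g : G, g⁻¹ * x * g ∈ X)
    (x : G) (hx : x ∈ X)
    (hbig : ∀ g : G, (fun y => g⁻¹ * y * g) '' compSet X x hx = compSet X x hx) :
    (∃ y ∈ compSet X x hx,
        ¬ ∀ a ∈ Subgroup.centralizer {y}, ∀ b ∈ Subgroup.centralizer {y}, a * b = b * a) ∨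
      ((Subgroup.closure (compSet X x hx)).Normal ∧
        ∀ a ∈ Subgroup.closure (compSet X x hx),
          ∀ b ∈ Subgroup.closure (compSet X x hx), a * b = b * a) := by

  by_cases hab : ∀ y ∈ compSet X x hx,
      ∀ a ∈ Subgroup.centralizer {y}, ∀ b ∈ Subgroup.centralizer {y}, a * b = b * a
  · right
    -- every element of the component commutes with x
    have key : ∀ u v : X, (commGraph X).Walk u v →
        (commGraph X).Reachable ⟨x, hx⟩ u → (u : G) * x = x * (u : G) →
        (v : G) * x = x * (v : G) := by
      intro u v p
      induction p with
      | nil => intro _ h; exact h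
      | @cons a b c hadj p ih =>
        intro hr hcomm
        have haC : (a : G) ∈ compSet X x hx := ⟨a.2, by simpa using hr⟩
        have hbx : (b : G) * x = x * (b : G) := by
          have h1 : x ∈ Subgroup.centralizer {(a : G)} := by
            rw [Subgroup.mem_centralizer_singleton_iff]; exact hcomm.symm
          have h2 : (b : G) ∈ Subgroup.centralizer {(a : G)} := by
            rw [Subgroup.mem_centralizer_singleton_iff]; exact hadj.2.symm
          exact hab _ haC _ h2 _ h1
        exact ih (hr.trans hadj.reachable) hbx
    have hcommx : ∀ y ∈ compSet X x hx, y * x = x * y := by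
      rintro y ⟨hy, hr⟩
      obtain ⟨p⟩ := hr
      exact key _ _ p (SimpleGraph.Reachable.refl _) (by simp)
    have hpair : ∀ y ∈ compSet X x hx, ∀ z ∈ compSet X x hx, y * z = z * y := by
      intro y hy z hz
      have hxC : x ∈ compSet X x hx := ⟨hx, SimpleGraph.Reachable.refl _⟩
      have h1 : y ∈ Subgroup.centralizer {x} := by
        rw [Subgroup.mem_centralizer_singleton_iff]; exact hcommx y hy
      have h2 : z ∈ Subgroup.centralizer {x} := by
        rw [Subgroup.mem_centralizer_singleton_iff]; exact hcommx z hz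
      exact hab _ hxC _ h1 _ h2
    constructor
    · constructor
      intro n hn g
      have himg : (fun y => g * y * g⁻¹) '' compSet X x hx = compSet X x hx := by
        have := hbig g⁻¹
        simpa using this
      refine Subgroup.closure_induction ?_ ?_ ?_ ?_ hn
      · intro y hy
        apply Subgroup.subset_closure
        rw [← himg]
        exact ⟨y, hy, rfl⟩
      · simpa using (Subgroup.closure (compSet X x hx)).one_mem
      · intro a b _ _ ha hb
        have : g * (a * b) * g⁻¹ = (g * a * g⁻¹) * (g * b * g⁻¹) := by group
        rw [this]; exact Subgroup.mul_mem _ ha hb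
      · intro a _ ha
        have : g * a⁻¹ * g⁻¹ = (g * a * g⁻¹)⁻¹ := by group
        rw [this]; exact Subgroup.inv_mem _ ha
    · intro a ha b hb
      have hle : Subgroup.closure (compSet X x hx) ≤
          Subgroup.centralizer (compSet X x hx) := by
        rw [Subgroup.closure_le]
        intro y hy
        rw [SetLike.mem_coe, Subgroup.mem_centralizer_iff]
        intro z hz
        exact hpair z hz y hy
      have hb' : ∀ y ∈ compSet X x hx, y * b = b * y :=
        Subgroup.mem_centralizer_iff.mp (hle hb)
      have ha' : a ∈ Subgroup.centralizer {b} := by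
        have : Subgroup.closure (compSet X x hx) ≤ Subgroup.centralizer {b} := by
          rw [Subgroup.closure_le]
          intro y hy
          rw [SetLike.mem_coe, Subgroup.mem_centralizer_singleton_iff]
          exact hb' y hy
        exact this ha
      exact Subgroup.mem_centralizer_singleton_iff.mp ha'
  · left
    by_contra h
    apply hab
    intro y hy
    by_contra h2
    exact h ⟨y, hy, h2⟩
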